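/- Let X be a finite type, let p : X → ℝ → ℝ be a parameterized probability distribution on X (p(x;θ) > 0 for all x, ∑_{x∈X} p(x;θ) = 1 for all θ) with θ ↦ p(x;θ) twice differentiable for each x, and let f : X → ℝ → ℝ with θ ↦ f(x;θ) twice differentiable for each x. Define L(θ) = ∑_{x∈X} p(x;θ) f(x;θ) and g(x;θ) = f(x;θ) ∂_θ log p(x;θ) + ∂_θ f(x;θ). Then for every θ, L''(θ) = ∑_{x∈X} p(x;θ) · ( g(x;θ) · ∂_θ log p(x;θ) + ∂_θ g(x;θ) ). -/

import Mathlib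

/-- The exact second-order score function estimator is unbiased:
`L''(θ) = ∑_x p(x;θ) (g(x;θ) ∂_θ log p(x;θ) + ∂_θ g(x;θ))` where
`g(x;θ) = f(x;θ) ∂_θ log p(x;θ) + ∂_θ f(x;θ)`. -/
theorem second_order_score_function_estimator_unbiased
    {X : Type*} [Fintype X] (p f g : X → ℝ → ℝ)
    (hp_pos : ∀ x θ, 0 < p x θ)
    (hp_sum : ∀ θ, ∑ x, p x θ = 1)
    (hp_smooth : ∀ x, ContDiff ℝ 2 (p x))
    (hf_smooth : ∀ x, ContDiff ℝ 2 (f x))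
    (hg : ∀ x θ, g x θ =
      f x θ * deriv (fun θ => Real.log (p x θ)) θ + deriv (f x) θ) :
    ∀ θ : ℝ,
      deriv (deriv (fun θ => ∑ x, p x θ * f x θ)) θ =
        ∑ x, p x θ *
          (g x θ * deriv (fun θ => Real.log (p x θ)) θ + deriv (g x) θ) := by
  intro θ
  -- basic differentiability facts
  have hpd : ∀ x, Differentiable ℝ (p x) := fun x => (hp_smooth x).differentiable (by norm_num)
  have hfd : ∀ x, Differentiable ℝ (f x) := fun x => (hf_smooth x).differentiable (by norm_num)
  have htwo : (2 : WithTop ℕ∞) = 1 + 1 := by norm_num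
  have hpd' : ∀ x, ContDiff ℝ 1 (deriv (p x)) := fun x =>
    (contDiff_succ_iff_deriv.mp (show ContDiff ℝ (1+1) (p x) from htwo ▸ hp_smooth x)).2.2
  have hfd' : ∀ x, ContDiff ℝ 1 (deriv (f x)) := fun x =>
    (contDiff_succ_iff_deriv.mp (show ContDiff ℝ (1+1) (f x) from htwo ▸ hf_smooth x)).2.2
  have hpd'd : ∀ x, Differentiable ℝ (deriv (p x)) := fun x => (hpd' x).differentiable (by norm_num)
  have hfd'd : ∀ x, Differentiable ℝ (deriv (f x)) := fun x => (hfd' x).differentiable (by norm_num)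
  have hne : ∀ x t, p x t ≠ 0 := fun x t => (hp_pos x t).ne'
  -- derivative of log
  have hlog : ∀ x t, deriv (fun s => Real.log (p x s)) t = deriv (p x) t / p x t := by
    intro x t
    exact (((hpd x t).hasDerivAt).log (hne x t)).deriv
  -- g as explicit function
  have hgfun : ∀ x, g x = fun t => f x t * (deriv (p x) t / p x t) + deriv (f x) t := by
    intro x; funext t; rw [hg x t, hlog]
  have hgd : ∀ x, Differentiable ℝ (g x) := by
    intro x; rw [hgfun x]
    exact ((hfd x).mul ((hpd'd x).div (hpd x) (hne x))).add (hfd'd x)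
  -- p*g = deriv (p*f)
  have hpg : ∀ x, (fun t => p x t * g x t) = deriv (fun t => p x t * f x t) := by
    intro x; funext t
    rw [deriv_fun_mul (hpd x t) (hfd x t), hgfun x]
    field_simp [hne]
  -- product functions
  have hF : ∀ x, ContDiff ℝ 2 (fun t => p x t * f x t) := fun x =>
    (hp_smooth x).mul (hf_smooth x)
  have hFd : ∀ x, Differentiable ℝ (fun t => p x t * f x t) := fun x =>
    (hF x).differentiable (by norm_num)
  have hFd' : ∀ x, Differentiable ℝ (deriv (fun t => p x t * f x t)) := fun x =>
    ((contDiff_succ_iff_deriv.mp (show ContDiff ℝ (1+1) (fun t => p x t * f x t) from htwo ▸ hF x)).2.2).differentiable (by norm_num)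
  -- RHS term equals second derivative of p*f
  have hterm : ∀ x, p x θ * (g x θ * deriv (fun s => Real.log (p x s)) θ + deriv (g x) θ)
      = deriv (deriv (fun t => p x t * f x t)) θ := by
    intro x
    rw [← hpg x, deriv_fun_mul (hpd x θ) (hgd x θ), hlog]
    field_simp [hne]
  -- LHS: swap deriv with finite sums
  have hsum1 : deriv (fun t => ∑ x, p x t * f x t) = fun t => ∑ x, deriv (fun s => p x s * f x s) t := by
    funext t
    exact deriv_fun_sum (fun x _ => (hFd x t))
  rw [hsum1, deriv_fun_sum (fun x _ => (hFd' x θ))]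
  exact Finset.sum_congr rfl fun x _ => (hterm x).symm
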